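/- Let M be a simple ternary matroid with no coloops that is k-paving. Then the ground set of M is a circuit of M, or r(M) ≤ 4k + 2. -/

import Mathlib

namespace Matroid

variable {α : Type*}

/-- A circuit of a matroid is a minimal dependent set. -/
def Circuit (M : Matroid α) (C : Set α) : Prop :=
  M.Dep C ∧ ∀ D, D ⊂ C → M.Indep D

/-- A coloop is an element belonging to every basis. -/
def Coloop (M : Matroid α) (e : α) : Prop :=
  e ∈ M.E ∧ ∀ B, M.IsBase B → e ∈ B

/-- A matroid is simple if every subset of the ground set with at most two
elements is independent. -/
def Simple (M : Matroid α) : Prop :=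
  ∀ e ∈ M.E, ∀ f ∈ M.E, M.Indep {e, f}

/-- The rank of a matroid: the supremum of the cardinalities of its bases. -/
noncomputable def rk (M : Matroid α) : ℕ :=
  sSup {n | ∃ B, M.IsBase B ∧ B.ncard = n}

/-- A matroid is representable over a field `F` if independence in `M` coincides
with linear independence under some assignment of vectors to ground set elements. -/
def RepresentableOver (M : Matroid α) (F : Type) [Field F] : Prop :=
  ∃ (n : ℕ) (φ : α → (Fin n → F)),
    ∀ I, I ⊆ M.E → (M.Indep I ↔ LinearIndependent F (fun x : I => φ x))

/-- An element `e` is `k`-loose if every circuit containing `e` has size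
greater than `r - k`, where `r` is the rank of the matroid. -/
def KLoose (M : Matroid α) (k : ℕ) (e : α) : Prop :=
  e ∈ M.E ∧ ∀ C, M.Circuit C → e ∈ C → M.rk - k < C.ncard

/-- A matroid is `k`-paving if every element is `k`-loose. -/
def KPaving (M : Matroid α) (k : ℕ) : Prop :=
  ∀ e ∈ M.E, M.KLoose k e

end Matroid

section Aux

open Matroid

variable {α : Type*}

/-- The custom rank equals the cardinality of any base. -/
lemma aux_rk_eq_ncard (M : Matroid α) {B : Set α} (hB : M.IsBase B) : M.rk = B.ncard := by
  have hset : {n | ∃ B', M.IsBase B' ∧ B'.ncard = n} = {B.ncard} := by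
    ext n
    constructor
    · rintro ⟨B', hB', rfl⟩
      exact hB'.ncard_eq_ncard_of_isBase hB
    · rintro rfl
      exact ⟨B, hB, rfl⟩
  rw [Matroid.rk, hset, csSup_singleton]

/-- Every dependent set in a finite matroid contains a circuit. -/
lemma aux_exists_circuit (M : Matroid α) [M.Finite] {D : Set α} (hD : M.Dep D) :
    ∃ C, C ⊆ D ∧ M.Circuit C := by
  have hfin : D.Finite := M.ground_finite.subset hD.subset_ground
  obtain ⟨n, hn⟩ : ∃ n, D.ncard = n := ⟨_, rfl⟩
  induction n using Nat.strong_induction_on generalizing D with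
  | _ n ih =>
    by_cases hmin : ∀ D', D' ⊂ D → M.Indep D'
    · exact ⟨D, subset_rfl, hD, hmin⟩
    · push_neg at hmin
      obtain ⟨D', hD'sub, hD'dep⟩ := hmin
      have hD'fin : D'.Finite := hfin.subset hD'sub.subset
      have hD'dep' : M.Dep D' := ⟨hD'dep, hD'sub.subset.trans hD.subset_ground⟩
      have hlt : D'.ncard < n := hn ▸ Set.ncard_lt_ncard hD'sub hfin
      obtain ⟨C, hCsub, hC⟩ := ih D'.ncard hlt hD'dep' hD'fin rfl
      exact ⟨C, hCsub.trans hD'sub.subset, hC⟩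

/-- A circuit is nonempty. -/
lemma aux_circuit_nonempty (M : Matroid α) {C : Set α} (hC : M.Circuit C) : C.Nonempty := by
  rcases C.eq_empty_or_nonempty with rfl | h
  · exact absurd M.empty_indep hC.1.not_indep
  · exact h

/-- The key GF(3) counting fact. -/
lemma aux_zmod3_count (a b : ZMod 3) (h : a ≠ 0 ∨ b ≠ 0) :
    ((if a ≠ 0 then 1 else 0) + (if b ≠ 0 then 1 else 0)
      + (if a + b ≠ 0 then 1 else 0) + (if a - b ≠ 0 then 1 else 0) : ℕ) = 3 := by
  revert h; revert b; revert a; decide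

/-- Card of a subfinset as a sum of indicators. -/
lemma aux_card_eq_sum [DecidableEq α] {s t : Finset α} (h : t ⊆ s) :
    t.card = ∑ x ∈ s, (if x ∈ t then 1 else 0) := by
  rw [Finset.sum_ite_mem, Finset.inter_eq_right.2 h, Finset.card_eq_sum_ones]

end Aux

/-- A simple ternary matroid with no coloops that is `k`-paving is a circuit, or has
rank at most `4k + 2`. -/
theorem ternary_paving_rank_bound {α : Type*} (k : ℕ) (M : Matroid α) [M.Finite]
    (hsimple : M.Simple) (hternary : M.RepresentableOver (ZMod 3))
    (hcoloop : ∀ x, ¬ M.Coloop x) (hpaving : M.KPaving k) :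
    M.Circuit M.E ∨ M.rk ≤ 4 * k + 2 := by
  classical
  by_cases hle : M.rk ≤ 4 * k + 2
  · exact Or.inr hle
  push_neg at hle
  obtain ⟨B, hB⟩ := M.exists_isBase
  have hBE : B ⊆ M.E := hB.subset_ground
  have hEfin : M.E.Finite := M.ground_finite
  have hBfin : B.Finite := hEfin.subset hBE
  have hrk : M.rk = B.ncard := aux_rk_eq_ncard M hB
  by_cases htwo : ∃ e ∈ M.E \ B, ∃ f ∈ M.E \ B, e ≠ f
  · -- main case: two elements outside a base; derive a contradiction with `hle`
    exfalso
    obtain ⟨e, he, f, hf, hef⟩ := htwo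
    obtain ⟨n, φ, hφ⟩ := hternary
    obtain ⟨Ce, hCeSub, hCe⟩ := aux_exists_circuit M (hB.insert_dep he)
    obtain ⟨Cf, hCfSub, hCf⟩ := aux_exists_circuit M (hB.insert_dep hf)
    have heCe : e ∈ Ce := by
      by_contra h
      exact hCe.1.not_indep (hB.indep.subset (fun x hx =>
        ((hCeSub hx).resolve_left (fun h' => h (h' ▸ hx)))))
    have heCf : e ∉ Cf := fun h => by
      rcases hCfSub h with h' | h'
      · exact hef h'
      · exact he.2 h'
    -- a circuit carries a dependency vector with full support
    have key : ∀ C : Set α, M.Circuit C →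
        ∃ l : α →₀ ZMod 3, (↑l.support : Set α) = C ∧
          Finsupp.linearCombination (ZMod 3) φ l = 0 ∧ l ≠ 0 := by
      intro C hC
      have hCE : C ⊆ M.E := hC.1.subset_ground
      have hdep : ¬ LinearIndependent (ZMod 3) (φ ∘ ((↑) : C → α)) := by
        intro h
        exact hC.1.not_indep ((hφ C hCE).2 h)
      obtain ⟨l, hsupp, htot, hne⟩ := (linearDepOn_iff' (v := φ) (s := C)).1 hdep
      rw [Finsupp.mem_supported] at hsupp
      refine ⟨l, ?_, htot, hne⟩
      apply hsupp.antisymm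
      intro x hxC
      by_contra hx
      have hsub : (↑l.support : Set α) ⊆ C \ {x} := by
        intro y hy
        exact ⟨hsupp hy, fun h => hx (h ▸ hy)⟩
      have hCx : C \ {x} ⊂ C := Set.sdiff_singleton_ssubset.2 hxC
      have hind : M.Indep (C \ {x}) := hC.2 _ hCx
      have hli : LinearIndependent (ZMod 3) (φ ∘ ((↑) : (C \ {x} : Set α) → α)) :=
        (hφ _ ((Set.diff_subset).trans hCE)).1 hind
      exact hne ((linearIndepOn_iff (v := φ)).1 hli l
        ((Finsupp.mem_supported _ _).2 hsub) htot)
    obtain ⟨l, hlsupp, hltot, hlne⟩ := key Ce hCe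
    obtain ⟨l', hl'supp, hl'tot, hl'ne⟩ := key Cf hCf
    have hle' : l e ≠ 0 := by
      rw [← Finsupp.mem_support_iff, ← Finset.mem_coe, hlsupp]; exact heCe
    have hl'e : l' e = 0 := by
      by_contra h
      exact heCf (hl'supp ▸ (Finset.mem_coe.2 (Finsupp.mem_support_iff.2 h)))
    set s : Finset α := l.support ∪ l'.support with hs
    have hsE : (↑s : Set α) ⊆ M.E := by
      rw [hs, Finset.coe_union, hlsupp, hl'supp]
      exact Set.union_subset hCe.1.subset_ground hCf.1.subset_ground
    -- any nonzero dependency supported in `s` has a large support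
    have hbig : ∀ g : α →₀ ZMod 3, g ≠ 0 → g.support ⊆ s →
        Finsupp.linearCombination (ZMod 3) φ g = 0 → M.rk - k < g.support.card := by
      intro g hgne hgs hgtot
      have hgE : (↑g.support : Set α) ⊆ M.E := (Finset.coe_subset.2 hgs).trans hsE
      have hgdep : M.Dep (↑g.support : Set α) := by
        refine ⟨fun hind => ?_, hgE⟩
        have hli : LinearIndependent (ZMod 3)
            (φ ∘ ((↑) : (↑g.support : Set α) → α)) := (hφ _ hgE).1 hind
        exact hgne ((linearIndepOn_iff (v := φ)).1 hli g
          ((Finsupp.mem_supported _ _).2 subset_rfl) hgtot)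
      obtain ⟨C, hCsub, hC⟩ := aux_exists_circuit M hgdep
      obtain ⟨y, hy⟩ := aux_circuit_nonempty M hC
      have hyE : y ∈ M.E := hC.1.subset_ground hy
      have hlt := (hpaving y hyE).2 C hC hy
      calc M.rk - k < C.ncard := hlt
        _ ≤ (↑g.support : Set α).ncard :=
            Set.ncard_le_ncard hCsub (g.support.finite_toSet)
        _ = g.support.card := Set.ncard_coe_finset _
    have hsub3 : (l + l').support ⊆ s := Finsupp.support_add
    have hsub4 : (l - l').support ⊆ s := Finsupp.support_sub
    have h1 := hbig l hlne Finset.subset_union_left hltot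
    have h2 := hbig l' hl'ne Finset.subset_union_right hl'tot
    have hadd_ne : l + l' ≠ 0 := fun h => by
      have := congrFun (congrArg (fun g : α →₀ ZMod 3 => (g : α → ZMod 3)) h) e
      simp only [Finsupp.coe_add, Pi.add_apply, Finsupp.coe_zero, Pi.zero_apply, hl'e,
        add_zero] at this
      exact hle' this
    have hsub_ne : l - l' ≠ 0 := fun h => by
      have := congrFun (congrArg (fun g : α →₀ ZMod 3 => (g : α → ZMod 3)) h) e
      simp only [Finsupp.coe_sub, Pi.sub_apply, Finsupp.coe_zero, Pi.zero_apply, hl'e,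
        sub_zero] at this
      exact hle' this
    have h3 := hbig (l + l') hadd_ne hsub3 (by rw [map_add, hltot, hl'tot, add_zero])
    have h4 := hbig (l - l') hsub_ne hsub4 (by rw [map_sub, hltot, hl'tot, sub_zero])
    -- the counting identity
    have hcount : l.support.card + l'.support.card
        + (l + l').support.card + (l - l').support.card = 3 * s.card := by
      rw [aux_card_eq_sum (Finset.subset_union_left : l.support ⊆ s),
        aux_card_eq_sum (Finset.subset_union_right : l'.support ⊆ s),
        aux_card_eq_sum hsub3, aux_card_eq_sum hsub4,
        ← Finset.sum_add_distrib, ← Finset.sum_add_distrib, ← Finset.sum_add_distrib]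
      have hpt : ∀ x ∈ s, ((if x ∈ l.support then 1 else 0) + (if x ∈ l'.support then 1 else 0)
          + (if x ∈ (l + l').support then 1 else 0)
          + (if x ∈ (l - l').support then 1 else 0) : ℕ) = 3 := by
        intro x hx
        have hx' : l x ≠ 0 ∨ l' x ≠ 0 := by
          rcases Finset.mem_union.1 hx with h | h
          · exact Or.inl (Finsupp.mem_support_iff.1 h)
          · exact Or.inr (Finsupp.mem_support_iff.1 h)
        simp only [Finsupp.mem_support_iff, Finsupp.add_apply, Finsupp.sub_apply]
        exact aux_zmod3_count _ _ hx'
      rw [Finset.sum_congr rfl hpt, Finset.sum_const, smul_eq_mul, mul_comm]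
    have hscard : s.card ≤ M.rk + 2 := by
      have hsub : (↑s : Set α) ⊆ insert e (insert f B) := by
        rw [hs, Finset.coe_union, hlsupp, hl'supp]
        refine Set.union_subset (hCeSub.trans ?_) (hCfSub.trans ?_)
        · exact Set.insert_subset_insert (Set.subset_insert f B)
        · exact Set.subset_insert _ _
      calc s.card = (↑s : Set α).ncard := (Set.ncard_coe_finset _).symm
        _ ≤ (insert e (insert f B)).ncard :=
            Set.ncard_le_ncard hsub ((hBfin.insert f).insert e)
        _ ≤ (insert f B).ncard + 1 := Set.ncard_insert_le _ _
        _ ≤ B.ncard + 1 + 1 := Nat.add_le_add_right (Set.ncard_insert_le _ _) 1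
        _ = M.rk + 2 := by rw [hrk]
    omega
  · push_neg at htwo
    rcases Set.eq_empty_or_nonempty (M.E \ B) with hEB | ⟨f, hfEB⟩
    · -- the ground set is a base: contradiction with no coloops (or rank 0)
      exfalso
      have hEeqB : M.E = B := by
        apply Set.Subset.antisymm _ hBE
        intro x hx
        by_contra hxB
        exact (Set.eq_empty_iff_forall_notMem.1 hEB) x ⟨hx, hxB⟩
      rcases Set.eq_empty_or_nonempty M.E with hE | ⟨x, hx⟩
      · rw [hrk, ← hEeqB, hE, Set.ncard_empty] at hle; omega
      · refine hcoloop x ⟨hx, fun B' hB' => ?_⟩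
        have hB'B : B' = B := hB'.eq_of_subset_isBase hB (hEeqB ▸ hB'.subset_ground)
        rw [hB'B, ← hEeqB]
        exact hx
    · -- exactly one element outside the base: `M.E` is a circuit
      have hEB : M.E = insert f B := by
        apply Set.Subset.antisymm
        · intro x hx
          by_cases hxB : x ∈ B
          · exact Set.mem_insert_of_mem _ hxB
          · exact Set.mem_insert_iff.2 (Or.inl (htwo x ⟨hx, hxB⟩ f hfEB))
        · exact Set.insert_subset hfEB.1 hBE
      left
      have hdepE : M.Dep M.E := by
        have := hB.insert_dep hfEB
        rwa [← hEB] at this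
      refine ⟨hdepE, fun D hD => ?_⟩
      by_contra hind
      have hDdep : M.Dep D := ⟨hind, hD.subset⟩
      obtain ⟨C, hCsub, hC⟩ := aux_exists_circuit M hDdep
      obtain ⟨x, hxE, hxD⟩ := Set.exists_of_ssubset hD
      have hxC : x ∉ C := fun h => hxD (hCsub h)
      refine hcoloop x ⟨hxE, fun B' hB' => ?_⟩
      by_contra hxB'
      have hB'sub : B' ⊆ M.E \ {x} := fun y hy =>
        ⟨hB'.subset_ground hy, fun h => hxB' (h ▸ hy)⟩
      have hcard : (M.E \ {x}).ncard ≤ B'.ncard := by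
        have h1 : B'.ncard = B.ncard := hB'.ncard_eq_ncard_of_isBase hB
        have h2 : M.E.ncard = B.ncard + 1 := by
          rw [hEB, Set.ncard_insert_of_notMem hfEB.2 hBfin]
        have h3 : (M.E \ {x}).ncard = M.E.ncard - 1 :=
          Set.ncard_diff_singleton_of_mem hxE
        have h4 : 1 ≤ M.E.ncard := by omega
        omega
      have hB'eq : B' = M.E \ {x} :=
        Set.eq_of_subset_of_ncard_le hB'sub hcard hEfin.diff
      have hCB' : C ⊆ B' := by
        rw [hB'eq]
        exact fun y hy => ⟨(hCsub.trans hD.subset) hy, fun h => hxC (h ▸ hy)⟩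
      exact hC.1.not_indep (hB'.indep.subset hCB')
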